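/- arXiv:1002.3894 — 2 statements merged into one kernel-verified Lean document; each statement's English description precedes it below -/
import Mathlib

section
/- Let B(x) = Σ b_k x^k/k! satisfy e^{B(x)} - 1 - B(x) = x²/2 with b_1 = 1. Then B'(x)·B(x) = x - (x²/2)·B'(x), and consequently for k ≥ 2, b_k = -(1/(k+1))·( C(k,2)·b_{k-1} + Σ_{j=1}^{k-2} C(k,j)·b_{j+1}·b_{k-j} ). -/
/-- Composition `f ∘ g` of formal power series (intended for `g` with zero constant term). -/
noncomputable def pcomp {A : Type*} [CommRing A] (f g : PowerSeries A) : PowerSeries A :=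
  PowerSeries.mk fun n =>
    PowerSeries.coeff n
      (∑ k ∈ Finset.range (n + 1), PowerSeries.C (PowerSeries.coeff k f) * g ^ k)

open PowerSeries in
lemma coeff_pow_zero' (g : PowerSeries ℚ) (hg : constantCoeff g = 0) {n k : ℕ} (h : n < k) :
    PowerSeries.coeff n (g ^ k) = 0 := by
  have : (X : ℚ⟦X⟧) ^ k ∣ g ^ k := pow_dvd_pow_of_dvd (X_dvd_iff.mpr hg) k
  exact (X_pow_dvd_iff.mp this) n h

open PowerSeries in
lemma coeff_sum_eq (f g : ℚ⟦X⟧) (hg : constantCoeff g = 0) {m N : ℕ} (h : m < N) :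
    PowerSeries.coeff m (∑ k ∈ Finset.range N, C (PowerSeries.coeff k f) * g ^ k)
      = PowerSeries.coeff m (pcomp f g) := by
  rw [pcomp, coeff_mk, map_sum, map_sum]
  symm
  apply Finset.sum_subset
  · exact Finset.range_subset_range.mpr h
  · intro k _ hk
    simp only [Finset.mem_range, not_lt] at hk
    rw [coeff_C_mul, coeff_pow_zero' g hg (by omega), mul_zero]

open PowerSeries in
lemma deriv_term (j : ℕ) (g : ℚ⟦X⟧) :
    PowerSeries.derivative ℚ (C ((1:ℚ)/(Nat.factorial (j+1))) * g ^ (j+1))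
      = C ((1:ℚ)/(Nat.factorial j)) * g ^ j * PowerSeries.derivative ℚ g := by
  rw [Derivation.leibniz, derivative_C, smul_zero, add_zero, Derivation.leibniz_pow]
  rw [smul_eq_mul, nsmul_eq_mul, smul_eq_mul, Nat.add_sub_cancel]
  have h1 : ((j+1:ℕ) : ℚ⟦X⟧) = C (((j+1:ℕ)):ℚ) := (map_natCast (C (R := ℚ)) (j+1)).symm
  rw [h1, ← mul_assoc, ← map_mul]
  have h2 : (1:ℚ)/(Nat.factorial (j+1)) * (((j+1:ℕ)):ℚ) = 1/(Nat.factorial j) := by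
    rw [Nat.factorial_succ]
    push_cast
    field_simp
  rw [h2]; ring

open PowerSeries in
lemma deriv_S (g : ℚ⟦X⟧) (N : ℕ) :
    PowerSeries.derivative ℚ
        (∑ k ∈ Finset.range (N+1), C (PowerSeries.coeff k (exp ℚ)) * g ^ k)
      = (∑ k ∈ Finset.range N, C (PowerSeries.coeff k (exp ℚ)) * g ^ k)
          * PowerSeries.derivative ℚ g := by
  have hc : ∀ j : ℕ, PowerSeries.coeff j (exp ℚ) = 1/(Nat.factorial j) := fun j => by
    simp [coeff_exp]
  simp_rw [hc]
  rw [map_sum, Finset.sum_range_succ']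
  simp only [pow_zero, mul_one, derivative_C, add_zero]
  rw [Finset.sum_mul]
  exact Finset.sum_congr rfl fun j _ => deriv_term j g

open PowerSeries in
lemma deriv_pcomp_exp (g : ℚ⟦X⟧) (hg : constantCoeff g = 0) :
    PowerSeries.derivative ℚ (pcomp (exp ℚ) g)
      = pcomp (exp ℚ) g * PowerSeries.derivative ℚ g := by
  ext n
  rw [coeff_derivative]
  rw [show PowerSeries.coeff (n+1) (pcomp (exp ℚ) g)
      = PowerSeries.coeff (n+1)
        (∑ k ∈ Finset.range (n+1+1), C (PowerSeries.coeff k (exp ℚ)) * g ^ k) from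
    (coeff_sum_eq (exp ℚ) g hg (by omega)).symm]
  rw [← coeff_derivative, deriv_S g (n+1)]
  rw [coeff_mul, coeff_mul]
  apply Finset.sum_congr rfl
  intro p hp
  rw [Finset.HasAntidiagonal.mem_antidiagonal] at hp
  rw [coeff_sum_eq (exp ℚ) g hg (show p.1 < n+1 by omega)]

open PowerSeries in
lemma hX2deriv : PowerSeries.derivative ℚ ((1/2:ℚ) • (X:ℚ⟦X⟧)^2) = X := by
  rw [smul_eq_C_mul, Derivation.leibniz, derivative_C, smul_zero, add_zero,
    Derivation.leibniz_pow, smul_eq_mul, nsmul_eq_mul, smul_eq_mul, pow_one, derivative_X,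
    mul_one]
  rw [show ((2:ℕ) : ℚ⟦X⟧) = C (2:ℚ) by push_cast; rfl]
  rw [← mul_assoc, ← map_mul]
  norm_num

/-- If `B(x) = Σ b_k x^k/k!` satisfies `e^{B(x)} - 1 - B(x) = x²/2` with `b_0 = 0`,
`b_1 = 1`, then `B'(x)·B(x) = x - (x²/2)·B'(x)` and, for `k ≥ 2`,
`b_k = -(1/(k+1))·(C(k,2) b_{k-1} + Σ_{j=1}^{k-2} C(k,j) b_{j+1} b_{k-j})`. -/
theorem recurrence_B (B : PowerSeries ℚ) (b : ℕ → ℚ)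
    (hB0 : PowerSeries.constantCoeff B = 0)
    (hB1 : PowerSeries.coeff 1 B = 1)
    (hB : pcomp (PowerSeries.exp ℚ) B - 1 - B = (1/2 : ℚ) • PowerSeries.X ^ 2)
    (hb : ∀ k, b k = (Nat.factorial k : ℚ) * PowerSeries.coeff k B) :
    PowerSeries.derivative ℚ B * B =
        PowerSeries.X - ((1/2 : ℚ) • PowerSeries.X ^ 2) * PowerSeries.derivative ℚ B ∧
      ∀ k : ℕ, 2 ≤ k →
        b k = -(1 / ((k : ℚ) + 1)) * ((Nat.choose k 2 : ℚ) * b (k - 1) +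
          ∑ j ∈ Finset.Icc 1 (k - 2), (Nat.choose k j : ℚ) * b (j + 1) * b (k - j)) := by
  rw [sub_sub] at hB
  have hE : pcomp (PowerSeries.exp ℚ) B
      = (1/2 : ℚ) • (PowerSeries.X : PowerSeries ℚ) ^ 2 + (1 + B) := sub_eq_iff_eq_add.mp hB
  have hD := deriv_pcomp_exp B hB0
  rw [hE, map_add, map_add, hX2deriv, Derivation.map_one_eq_zero] at hD
  have part1 : PowerSeries.derivative ℚ B * B =
      PowerSeries.X - ((1/2 : ℚ) • PowerSeries.X ^ 2) * PowerSeries.derivative ℚ B := by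
    simp only [PowerSeries.smul_eq_C_mul] at hD ⊢
    linear_combination -hD
  refine ⟨part1, ?_⟩
  intro k hk
  obtain ⟨m, rfl⟩ : ∃ m, k = m + 2 := ⟨k - 2, by omega⟩
  have c0 : PowerSeries.coeff 0 B = 0 := by
    rw [PowerSeries.coeff_zero_eq_constantCoeff]; exact hB0
  have hco := congrArg (PowerSeries.coeff (m+2)) part1
  rw [map_sub, PowerSeries.coeff_mul,
    Finset.Nat.sum_antidiagonal_eq_sum_range_succ_mk] at hco
  simp only [PowerSeries.coeff_derivative] at hco
  rw [PowerSeries.smul_eq_C_mul, mul_assoc, PowerSeries.coeff_C_mul,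
    PowerSeries.coeff_X_pow_mul, PowerSeries.coeff_derivative, PowerSeries.coeff_X,
    if_neg (by omega : ¬(m+2=1))] at hco
  rw [show (m+2).succ = m+1+1+1 from rfl, Finset.sum_range_succ, Finset.sum_range_succ,
    Finset.sum_range_succ'] at hco
  rw [show m+2-0 = m+2 from by omega, show m+2-(m+1) = 1 from by omega,
    show m+2-(m+2) = 0 from by omega, c0, mul_zero, add_zero, zero_add, hB1] at hco
  push_cast at hco
  rw [show m+1+1 = m+2 from by omega] at hco
  have hgoal : ∑ j ∈ Finset.Icc 1 (m+2-2), ((m+2).choose j : ℚ) * b (j+1) * b (m+2-j)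
      = ((m+2).factorial : ℚ) * ∑ x ∈ Finset.range m,
          PowerSeries.coeff (x+1+1) B * ((x:ℚ)+1+1) * PowerSeries.coeff (m+1-x) B := by
    rw [show m+2-2 = m from by omega, Finset.mul_sum, ← Finset.Ico_add_one_right_eq_Icc,
      Finset.sum_Ico_eq_sum_range, show m+1-1 = m from by omega]
    refine Finset.sum_congr rfl fun x hx => ?_
    rw [Finset.mem_range] at hx
    rw [show 1+x = x+1 from by omega, show m+2-(x+1) = m+1-x from by omega, hb, hb]
    have h := Nat.choose_mul_factorial_mul_factorial (show x+1 ≤ m+2 by omega)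
    rw [show m+2-(x+1) = m+1-x from by omega] at h
    have hq : ((m+2).choose (x+1) : ℚ) * ((x+1).factorial:ℚ) * ((m+1-x).factorial:ℚ)
        = ((m+2).factorial : ℚ) := by exact_mod_cast h
    have hf : ((x+1+1).factorial : ℚ) = ((x:ℚ)+2) * ((x+1).factorial:ℚ) := by
      rw [Nat.factorial_succ]; push_cast; ring
    linear_combination (((m+2).choose (x+1):ℚ) * ((m+1-x).factorial:ℚ)
        * PowerSeries.coeff (x+1+1) B * PowerSeries.coeff (m+1-x) B) * hf
      + (((x:ℚ)+2) * PowerSeries.coeff (x+1+1) B * PowerSeries.coeff (m+1-x) B) * hq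
  have hch : ((m+2).choose 2 : ℚ) * ((m+1).factorial:ℚ)
      = (1/2)*((m:ℚ)+1)*((m+2).factorial:ℚ) := by
    have h := Nat.choose_mul_factorial_mul_factorial (show 2 ≤ m+2 by omega)
    rw [show m+2-2 = m from by omega] at h
    have hq : ((m+2).choose 2 : ℚ) * 2 * (m.factorial:ℚ) = ((m+2).factorial:ℚ) := by
      exact_mod_cast h
    have hf1 : ((m+1).factorial : ℚ) = ((m:ℚ)+1) * (m.factorial:ℚ) := by
      rw [Nat.factorial_succ]; push_cast; ring
    linear_combination ((m+2).choose 2 : ℚ) * hf1 + (1/2)*((m:ℚ)+1) * hq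
  rw [show m+2-1 = m+1 from by omega, hgoal, hb (m+2), hb (m+1)]
  have hne : ((m+2:ℕ):ℚ) + 1 ≠ 0 := by push_cast; positivity
  field_simp
  push_cast
  linear_combination ((m+2).factorial:ℚ) * hco + (PowerSeries.coeff (m+1) B) * hch
end

section
/- Let C(x) = Σ c_k x^k/k! satisfy C(x) - x²/2 = log(1+C(x)) with c_1 = 1. Then C'(x)·C(x) = x·C(x) + x, and consequently for k ≥ 2, c_k = (1/(k+1))·( k·c_{k-1} - Σ_{j=1}^{k-2} C(k,j)·c_{j+1}·c_{k-j} ). -/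
open PowerSeries Finset

/-- The formal power series `log(1+X) = Σ_{n≥1} (-1)^{n+1} X^n/n`. -/
noncomputable def logOneAdd : PowerSeries ℚ :=
  PowerSeries.mk fun n => if n = 0 then 0 else (-1 : ℚ) ^ (n + 1) / n



lemma pow_coeff_zero (f : ℚ⟦X⟧) (h : constantCoeff f = 0) {n k : ℕ} (hk : n < k) :
    coeff n (f^k) = 0 := by
  have hd : (X : ℚ⟦X⟧)^k ∣ f^k := pow_dvd_pow_of_dvd (X_dvd_iff.mpr h) k
  exact X_pow_dvd_iff.mp hd n hk

lemma coeff_pcomp (f g : ℚ⟦X⟧) (hg : constantCoeff g = 0) {m n : ℕ} (h : m ≤ n) :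
    coeff m (pcomp f g) =
      coeff m (∑ k ∈ Finset.range (n + 1), PowerSeries.C (coeff k f) * g ^ k) := by
  rw [pcomp, coeff_mk]
  rw [← Finset.sum_range_add_sum_Ico _ (Nat.add_le_add_right h 1)]
  rw [map_add, left_eq_add, map_sum]
  refine Finset.sum_eq_zero fun k hk => ?_
  simp only [Finset.mem_Ico] at hk
  rw [coeff_C_mul, pow_coeff_zero g hg (by omega), mul_zero]

lemma coeff_mul_congr (A P Q : ℚ⟦X⟧) (n : ℕ) (h : ∀ q ≤ n, coeff q P = coeff q Q) :
    coeff n (A * P) = coeff n (A * Q) := by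
  rw [coeff_mul, coeff_mul]
  refine Finset.sum_congr rfl fun p hp => ?_
  rw [Finset.HasAntidiagonal.mem_antidiagonal] at hp
  rw [h p.2 (by omega)]

lemma pcomp_derivative (f g : ℚ⟦X⟧) (hg : constantCoeff g = 0) :
    derivative ℚ (pcomp f g) = pcomp (derivative ℚ f) g * derivative ℚ g := by
  ext n
  have lhs : coeff n (derivative ℚ (pcomp f g)) =
      coeff n (derivative ℚ (∑ k ∈ Finset.range (n + 2),
        PowerSeries.C (coeff k f) * g ^ k)) := by
    rw [coeff_derivative, coeff_derivative, coeff_pcomp f g hg (le_refl (n+1))]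
  have rhs : coeff n (pcomp (derivative ℚ f) g * derivative ℚ g) =
      coeff n ((∑ k ∈ Finset.range (n + 1),
        PowerSeries.C (coeff k (derivative ℚ f)) * g ^ k) * derivative ℚ g) := by
    rw [mul_comm, mul_comm _ (derivative ℚ g)]
    exact coeff_mul_congr _ _ _ n fun q hq => coeff_pcomp (derivative ℚ f) g hg hq
  rw [lhs, rhs]
  congr 1
  rw [map_sum, Finset.sum_mul]
  rw [Finset.sum_range_succ' (fun k => (derivative ℚ) (PowerSeries.C ((coeff k) f) * g ^ k)) (n+1)]
  simp only [derivative_C, Derivation.leibniz, Derivation.leibniz_pow, derivative_C, smul_eq_mul,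
    mul_zero, add_zero, zero_mul, pow_zero, zero_smul, smul_zero,
    Derivation.map_one_eq_zero]

  refine Finset.sum_congr rfl fun k _ => ?_
  simp only [Nat.add_sub_cancel, coeff_derivative, map_mul, nsmul_eq_mul, smul_eq_mul, map_add, map_one, map_natCast]
  push_cast
  ring


lemma coeff_deriv_log (k : ℕ) : coeff k (derivative ℚ logOneAdd) = (-1 : ℚ) ^ k := by
  rw [coeff_derivative, logOneAdd, coeff_mk]
  simp only [Nat.add_eq_zero, one_ne_zero, and_false, if_false]
  rw [pow_succ, pow_succ]
  field_simp
  push_cast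
  ring

lemma inv_lemma (D : ℚ⟦X⟧) (hD0 : constantCoeff D = 0) :
    (1 + D) * pcomp (derivative ℚ logOneAdd) D = 1 := by
  ext n
  rw [coeff_mul_congr _ _ (∑ k ∈ Finset.range (n + 1),
      PowerSeries.C (coeff k (derivative ℚ logOneAdd)) * D ^ k) n
      (fun q hq => coeff_pcomp _ D hD0 hq)]
  have hsum : ∑ k ∈ Finset.range (n + 1),
      PowerSeries.C (coeff k (derivative ℚ logOneAdd)) * D ^ k
      = ∑ k ∈ Finset.range (n + 1), (-D) ^ k := by
    refine Finset.sum_congr rfl fun k _ => ?_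
    rw [coeff_deriv_log, map_pow, map_neg, map_one, neg_pow D]
  rw [hsum]
  have geom : (1 + D) * ∑ k ∈ Finset.range (n + 1), (-D) ^ k = 1 - (-D) ^ (n + 1) := by
    have := geom_sum_mul (-D) (n + 1)
    have h2 : (-D - 1) = -(1 + D) := by ring
    rw [h2] at this
    linear_combination -this
  rw [geom, map_sub, pow_coeff_zero (-D) (by simp [hD0]) (Nat.lt_succ_self n), sub_zero]

theorem part1 (C : PowerSeries ℚ) (hC0 : PowerSeries.constantCoeff C = 0)
    (hC : C - (1/2 : ℚ) • PowerSeries.X ^ 2 = pcomp logOneAdd C) :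
    PowerSeries.derivative ℚ C * C = PowerSeries.X * C + PowerSeries.X := by
  have key := congrArg (derivative ℚ) hC
  rw [pcomp_derivative logOneAdd C hC0, map_sub, Derivation.map_smul,
    Derivation.leibniz_pow] at key
  simp only [derivative_X, pow_one, smul_eq_mul, mul_one] at key
  have hX : (1/2 : ℚ) • (2 • ((X : ℚ⟦X⟧) ^ (2-1))) = X := by
    rw [pow_one, nsmul_eq_mul, smul_eq_C_mul, ← mul_assoc,
      ← map_natCast (PowerSeries.C (R := ℚ)) 2, ← map_mul]
    norm_num
  rw [hX] at key
  have inv := inv_lemma C hC0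
  linear_combination (1 + C) * key + (derivative ℚ C) * inv


theorem part2 (C : PowerSeries ℚ) (c : ℕ → ℚ)
    (hC0 : PowerSeries.constantCoeff C = 0)
    (hC1 : PowerSeries.coeff 1 C = 1)
    (hD : PowerSeries.derivative ℚ C * C = PowerSeries.X * C + PowerSeries.X)
    (hc : ∀ k, c k = (Nat.factorial k : ℚ) * PowerSeries.coeff k C) :
    ∀ k : ℕ, 2 ≤ k →
        c k = (1 / ((k : ℚ) + 1)) * ((k : ℚ) * c (k - 1) -
          ∑ j ∈ Finset.Icc 1 (k - 2), (Nat.choose k j : ℚ) * c (j + 1) * c (k - j)) := by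
  intro k hk
  obtain ⟨m, rfl⟩ : ∃ m, k = m + 2 := ⟨k - 2, by omega⟩
  set k := m + 2 with hkdef
  -- coefficient equation
  have E : ∑ p ∈ Finset.range (k + 1),
      (coeff (p+1) C * (p+1)) * coeff (k - p) C = coeff (k-1) C := by
    have h := congrArg (coeff k) hD
    rw [coeff_mul, Finset.Nat.sum_antidiagonal_eq_sum_range_succ_mk, map_add] at h
    rw [show k = (k-1) + 1 by omega, coeff_succ_X_mul] at h
    rw [coeff_X] at h
    simp only [coeff_derivative] at h
    rw [if_neg (by omega), add_zero] at h
    rw [show k - 1 + 1 = k by omega] at h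
    exact h
  -- factorial identity per term
  have hfac : ∀ p ≤ k, (Nat.choose k p : ℚ) * c (p+1) * c (k-p) =
      (Nat.factorial k : ℚ) * ((coeff (p+1) C * (p+1)) * coeff (k-p) C) := by
    intro p hp
    have hn : (Nat.choose k p) * Nat.factorial (p+1) * Nat.factorial (k-p)
        = Nat.factorial k * (p+1) := by
      have h1 := Nat.choose_mul_factorial_mul_factorial hp
      rw [Nat.factorial_succ]
      calc Nat.choose k p * ((p+1) * Nat.factorial p) * Nat.factorial (k-p)
          = (p+1) * (Nat.choose k p * Nat.factorial p * Nat.factorial (k-p)) := by ring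
        _ = (p+1) * Nat.factorial k := by rw [h1]
        _ = Nat.factorial k * (p+1) := by ring
    have hnq : ((Nat.choose k p : ℚ)) * (Nat.factorial (p+1) : ℚ) * (Nat.factorial (k-p) : ℚ)
        = (Nat.factorial k : ℚ) * ((p:ℚ)+1) := by exact_mod_cast congrArg (Nat.cast (R := ℚ)) hn
    rw [hc (p+1), hc (k-p)]
    push_cast at hnq ⊢
    linear_combination (coeff (p+1) C * coeff (k-p) C) * hnq
  -- summed identity
  have hS : ∑ p ∈ Finset.range (k + 1), (Nat.choose k p : ℚ) * c (p+1) * c (k-p)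
      = (k : ℚ) * c (k-1) := by
    rw [Finset.sum_congr rfl (fun p hp => hfac p (by simp at hp; omega)), ← Finset.mul_sum, E,
      hc (k-1)]
    have : ((k:ℚ)) * (Nat.factorial (k-1) : ℚ) = (Nat.factorial k : ℚ) := by
      rw [← Nat.cast_mul]
      norm_cast
    rw [← mul_assoc, this]
  -- c values
  have hc0 : c 0 = 0 := by
    rw [hc 0, coeff_zero_eq_constantCoeff, hC0, mul_zero]
  have hc1 : c 1 = 1 := by rw [hc 1, hC1]; norm_num [Nat.factorial]
  -- split the sum
  set f : ℕ → ℚ := fun p => (Nat.choose k p : ℚ) * c (p+1) * c (k-p) with hf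
  have hsplit : ∑ p ∈ Finset.range (k + 1), f p
      = f 0 + (∑ j ∈ Finset.Icc 1 (k-2), f j) + f (k-1) + f k := by
    have h1 : ∑ j ∈ Finset.Icc 1 (k-2), f j = ∑ p ∈ Finset.range m, f (p + 1) := by
      rw [show k-2 = m by omega, ← Finset.Ico_add_one_right_eq_Icc, Finset.sum_Ico_eq_sum_range,
        show m + 1 - 1 = m by omega]
      exact Finset.sum_congr rfl fun p _ => by rw [add_comm 1 p]
    rw [show k + 1 = (m + 1) + 1 + 1 by omega, Finset.sum_range_succ, Finset.sum_range_succ,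
      Finset.sum_range_succ', h1]
    have e1 : m + 1 + 1 = k := by omega
    have e2 : m + 1 = k - 1 := by omega
    rw [e1, e2]
    ring
  have hf0 : f 0 = c k := by simp [hf, hc1]
  have hfk : f k = 0 := by
    simp [hf, show k - k = 0 by omega, hc0]
  have hch : Nat.choose (m+2) (m+1) = m + 2 := by
    simpa using Nat.choose_succ_self_right (m+1)
  have hfk1 : f (k-1) = (k:ℚ) * c k := by
    rw [show k - 1 = m + 1 by omega, hf]
    show (↑(Nat.choose k (m+1)) : ℚ) * c ((m+1)+1) * c (k - (m+1)) = (k:ℚ) * c k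
    have e2 : k - (m+1) = 1 := by omega
    have e3 : (m+1)+1 = k := by omega
    rw [e2, e3, hc1, mul_one, hkdef, hch]
  rw [hsplit, hf0, hfk, hfk1] at hS
  have hk1 : ((k:ℚ) + 1) ≠ 0 := by positivity
  rw [show k - 1 = m + 1 by omega] at hS ⊢
  field_simp
  linear_combination hS

/-- If `C(x) = Σ c_k x^k/k!` satisfies `C(x) - x²/2 = log(1+C(x))` with `c_0 = 0`,
`c_1 = 1`, then `C'(x)·C(x) = x·C(x) + x` and, for `k ≥ 2`,
`c_k = (1/(k+1))·(k c_{k-1} - Σ_{j=1}^{k-2} C(k,j) c_{j+1} c_{k-j})`. -/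
theorem recurrence_C (C : PowerSeries ℚ) (c : ℕ → ℚ)
    (hC0 : PowerSeries.constantCoeff C = 0)
    (hC1 : PowerSeries.coeff 1 C = 1)
    (hC : C - (1/2 : ℚ) • PowerSeries.X ^ 2 = pcomp logOneAdd C)
    (hc : ∀ k, c k = (Nat.factorial k : ℚ) * PowerSeries.coeff k C) :
    PowerSeries.derivative ℚ C * C = PowerSeries.X * C + PowerSeries.X ∧
      ∀ k : ℕ, 2 ≤ k →
        c k = (1 / ((k : ℚ) + 1)) * ((k : ℚ) * c (k - 1) -
          ∑ j ∈ Finset.Icc 1 (k - 2), (Nat.choose k j : ℚ) * c (j + 1) * c (k - j)) := by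
  have h1 := part1 C hC0 hC
  exact ⟨h1, part2 C c hC0 hC1 h1 hc⟩
end
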